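/- Fix real numbers t0 < t1, 0 ≤ x_min < x_max, a continuous G : [t0,t1] → ℝ, and λ ∈ ℝ. Let ψ : [t0,t1] × [x_min,x_max] → ℝ be C¹ with ∂_t ψ(t,x) + G(t) ∂_x ψ(t,x) = 0 for all (t,x) and ψ(t, x_max) = 0 for all t. Let a : [t0,t1] × [x_min,x_max] → ℝ be C¹ with ∂_t a(t,x) + G(t) ∂_x a(t,x) = λ a(t,x) + x³ for all (t,x) and a(t, x_min) = 0 for all t. Set y(t) = ∫_{x_min}^{x_max} x³ ψ(t,x) dx, and let z : [t0,t1] → ℝ be differentiable with z′(t) = λ z(t) + y(t). Then for all t ∈ [t0,t1], ∫_{x_min}^{x_max} a(t,x) ψ(t,x) dx − z(t) = e^{λ (t − t0)} (∫_{x_min}^{x_max} a(t0,x) ψ(t0,x) dx − z(t0)). In particular, if additionally a(t0, x) = 0 for all x, then ∫_{x_min}^{x_max} a(t,x) ψ(t,x) dx − z(t) = −e^{λ(t−t0)} z(t0). -/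

import Mathlib

set_option autoImplicit false
set_option maxHeartbeats 1000000

open MeasureTheory intervalIntegral Set

private theorem slice_fst' {f : ℝ × ℝ → ℝ} {L : ℝ × ℝ →L[ℝ] ℝ} {I J : Set ℝ} {t x : ℝ}
    (hf : HasFDerivWithinAt f L (I ×ˢ J) (t, x)) (hx : x ∈ J) :
    HasDerivWithinAt (fun s => f (s, x)) (L (1, 0)) I t :=
  hf.comp_hasDerivWithinAt t
    ((hasDerivWithinAt_id t I).prodMk (hasDerivWithinAt_const t I x)) (fun s hs => (Set.mk_mem_prod hs hx : (id s, x) ∈ I ×ˢ J))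

private theorem slice_snd' {f : ℝ × ℝ → ℝ} {L : ℝ × ℝ →L[ℝ] ℝ} {I J : Set ℝ} {t x : ℝ}
    (hf : HasFDerivWithinAt f L (I ×ˢ J) (t, x)) (ht : t ∈ I) :
    HasDerivWithinAt (fun ξ => f (t, ξ)) (L (0, 1)) J x :=
  hf.comp_hasDerivWithinAt x
    ((hasDerivWithinAt_const x J t).prodMk (hasDerivWithinAt_id x J)) (fun s hs => ⟨ht, hs⟩)

/-- existence of continuous partial derivatives for a C¹ function on a rectangle -/
private theorem partials' {f : ℝ → ℝ → ℝ} {t0 t1 xmin xmax : ℝ} (ht : t0 < t1) (hx : xmin < xmax)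
    (hC : ContDiffOn ℝ 1 (fun p : ℝ × ℝ => f p.1 p.2) (Set.Icc t0 t1 ×ˢ Set.Icc xmin xmax)) :
    ∃ ft fx : ℝ × ℝ → ℝ,
      ContinuousOn ft (Set.Icc t0 t1 ×ˢ Set.Icc xmin xmax) ∧
      ContinuousOn fx (Set.Icc t0 t1 ×ˢ Set.Icc xmin xmax) ∧
      (∀ t' ∈ Set.Icc t0 t1, ∀ x' ∈ Set.Icc xmin xmax,
        HasDerivWithinAt (fun s => f s x') (ft (t', x')) (Set.Icc t0 t1) t') ∧
      (∀ t' ∈ Set.Icc t0 t1, ∀ x' ∈ Set.Icc xmin xmax,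
        HasDerivWithinAt (fun ξ => f t' ξ) (fx (t', x')) (Set.Icc xmin xmax) x') := by
  have hUR : UniqueDiffOn ℝ (Set.Icc t0 t1 ×ˢ Set.Icc xmin xmax) :=
    (uniqueDiffOn_Icc ht).prod (uniqueDiffOn_Icc hx)
  set R := Set.Icc t0 t1 ×ˢ Set.Icc xmin xmax
  set F : ℝ × ℝ → ℝ := fun p => f p.1 p.2
  have hdiff : DifferentiableOn ℝ F R := hC.differentiableOn one_ne_zero
  have hcont : ContinuousOn (fderivWithin ℝ F R) R := hC.continuousOn_fderivWithin hUR le_rfl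
  refine ⟨fun p => fderivWithin ℝ F R p (1, 0), fun p => fderivWithin ℝ F R p (0, 1),
    ?_, ?_, ?_, ?_⟩
  · exact (ContinuousLinearMap.apply ℝ ℝ ((1:ℝ), (0:ℝ))).continuous.comp_continuousOn hcont
  · exact (ContinuousLinearMap.apply ℝ ℝ ((0:ℝ), (1:ℝ))).continuous.comp_continuousOn hcont
  · exact fun t' ht' x' hx' =>
      slice_fst' ((hdiff (t', x') ⟨ht', hx'⟩).hasFDerivWithinAt) hx'
  · exact fun t' ht' x' hx' =>
      slice_snd' ((hdiff (t', x') ⟨ht', hx'⟩).hasFDerivWithinAt) ht'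

private theorem contOn_param_int' {f : ℝ × ℝ → ℝ} {t0 t1 xmin xmax : ℝ}
    (hxm : xmin ≤ xmax)
    (hf : ContinuousOn f (Set.Icc t0 t1 ×ˢ Set.Icc xmin xmax)) :
    ContinuousOn (fun t => ∫ x in xmin..xmax, f (t, x)) (Set.Icc t0 t1) := by
  obtain ⟨M, hM⟩ := (isCompact_Icc.prod isCompact_Icc).exists_bound_of_continuousOn hf
  intro t₀ ht₀
  have hmem : ∀ᶠ t in nhdsWithin t₀ (Set.Icc t0 t1), t ∈ Set.Icc t0 t1 :=
    eventually_mem_nhdsWithin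
  apply intervalIntegral.continuousWithinAt_of_dominated_interval
    (bound := fun _ => M) (μ := volume)
  · filter_upwards [hmem] with t ht
    have : ContinuousOn (fun x => f (t, x)) (Set.Icc xmin xmax) :=
      hf.comp (by fun_prop) (fun x hx => ⟨ht, hx⟩)
    exact (this.aestronglyMeasurable measurableSet_Icc).mono_measure
      (Measure.restrict_mono (by rw [Set.uIoc_of_le hxm]; exact Set.Ioc_subset_Icc_self) le_rfl)
  · filter_upwards [hmem] with t ht
    filter_upwards with x hxi
    have hx : x ∈ Set.Icc xmin xmax := by
      rw [Set.uIoc_of_le hxm] at hxi; exact Set.Ioc_subset_Icc_self hxi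
    exact hM (t, x) ⟨ht, hx⟩
  · exact intervalIntegrable_const
  · filter_upwards with x hxi
    have hx : x ∈ Set.Icc xmin xmax := by
      rw [Set.uIoc_of_le hxm] at hxi; exact Set.Ioc_subset_Icc_self hxi
    have : ContinuousOn (fun t => f (t, x)) (Set.Icc t0 t1) :=
      hf.comp (by fun_prop) (fun s hs => ⟨hs, hx⟩)
    exact this t₀ ht₀

private theorem swap_int' {Q : ℝ × ℝ → ℝ} {t0 t1 xmin xmax t : ℝ}
    (hxm : xmin ≤ xmax) (ht0 : t0 ≤ t) (ht1 : t ≤ t1)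
    (hQ : ContinuousOn Q (Set.Icc t0 t1 ×ˢ Set.Icc xmin xmax)) :
    ∫ x in xmin..xmax, ∫ s in t0..t, Q (s, x) = ∫ s in t0..t, ∫ x in xmin..xmax, Q (s, x) := by
  have hQ' : ContinuousOn (fun p : ℝ × ℝ => Q (p.2, p.1))
      (Set.Icc xmin xmax ×ˢ Set.Icc t0 t1) :=
    hQ.comp (continuous_swap.continuousOn) (fun p hp => ⟨hp.2, hp.1⟩)
  have hint : IntegrableOn (fun p : ℝ × ℝ => Q (p.2, p.1))
      (Set.Ioc xmin xmax ×ˢ Set.Ioc t0 t) volume := by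
    apply (hQ'.integrableOn_compact (isCompact_Icc.prod isCompact_Icc)).mono_set
    exact Set.prod_mono Set.Ioc_subset_Icc_self
      ((Set.Ioc_subset_Ioc_right ht1).trans Set.Ioc_subset_Icc_self)
  rw [intervalIntegral.integral_of_le hxm, intervalIntegral.integral_of_le ht0]
  simp_rw [intervalIntegral.integral_of_le ht0, intervalIntegral.integral_of_le hxm]
  have hswap := MeasureTheory.integral_integral_swap (μ := volume.restrict (Set.Ioc xmin xmax))
    (ν := volume.restrict (Set.Ioc t0 t)) (f := fun x s => Q (s, x)) ?_
  · exact hswap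
  · rw [Measure.prod_restrict]
    exact hint

private theorem ftc_within' {g : ℝ → ℝ} {t0 t1 t : ℝ}
    (hg : ContinuousOn g (Set.Icc t0 t1)) (ht : t ∈ Set.Icc t0 t1) :
    HasDerivWithinAt (fun u => ∫ s in t0..u, g s) (g t) (Set.Icc t0 t1) t := by
  haveI : Fact (t ∈ Set.Icc t0 t1) := ⟨ht⟩
  apply intervalIntegral.integral_hasDerivWithinAt_right (t := Set.Icc t0 t1)
  · apply ContinuousOn.intervalIntegrable
    apply hg.mono
    rw [Set.uIcc_of_le ht.1]
    exact Set.Icc_subset_Icc le_rfl ht.2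
  · exact ⟨Set.Icc t0 t1, self_mem_nhdsWithin, hg.aestronglyMeasurable measurableSet_Icc⟩
  · exact hg t ht

theorem stmt13 (t0 t1 xmin xmax l : ℝ) (ht : t0 < t1) (hx0 : 0 ≤ xmin) (hx : xmin < xmax)
    (G : ℝ → ℝ) (hGcont : ContinuousOn G (Set.Icc t0 t1))
    (ψ a : ℝ → ℝ → ℝ) (z : ℝ → ℝ)
    (hCψ : ContDiffOn ℝ 1 (fun p : ℝ × ℝ => ψ p.1 p.2) (Set.Icc t0 t1 ×ˢ Set.Icc xmin xmax))
    (hCa : ContDiffOn ℝ 1 (fun p : ℝ × ℝ => a p.1 p.2) (Set.Icc t0 t1 ×ˢ Set.Icc xmin xmax))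
    (hPDEψ : ∀ t ∈ Set.Icc t0 t1, ∀ x ∈ Set.Icc xmin xmax,
      derivWithin (fun s => ψ s x) (Set.Icc t0 t1) t
        + G t * derivWithin (fun ξ => ψ t ξ) (Set.Icc xmin xmax) x = 0)
    (hPDEa : ∀ t ∈ Set.Icc t0 t1, ∀ x ∈ Set.Icc xmin xmax,
      derivWithin (fun s => a s x) (Set.Icc t0 t1) t
        + G t * derivWithin (fun ξ => a t ξ) (Set.Icc xmin xmax) x
        = l * a t x + x ^ 3)
    (hbψ : ∀ t ∈ Set.Icc t0 t1, ψ t xmax = 0)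
    (hba : ∀ t ∈ Set.Icc t0 t1, a t xmin = 0)
    (hz : ∀ t ∈ Set.Icc t0 t1,
      HasDerivWithinAt z (l * z t + ∫ x in xmin..xmax, x ^ 3 * ψ t x) (Set.Icc t0 t1) t) :
    (∀ t ∈ Set.Icc t0 t1,
      (∫ x in xmin..xmax, a t x * ψ t x) - z t
        = Real.exp (l * (t - t0)) * ((∫ x in xmin..xmax, a t0 x * ψ t0 x) - z t0)) ∧
    ((∀ x ∈ Set.Icc xmin xmax, a t0 x = 0) →
      ∀ t ∈ Set.Icc t0 t1,
        (∫ x in xmin..xmax, a t x * ψ t x) - z t = - Real.exp (l * (t - t0)) * z t0) := by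
  have ht01 : t0 ≤ t1 := ht.le
  have hxm : xmin ≤ xmax := hx.le
  have ht0I : t0 ∈ Set.Icc t0 t1 := ⟨le_rfl, ht01⟩
  have hUI : UniqueDiffOn ℝ (Set.Icc t0 t1) := uniqueDiffOn_Icc ht
  have hUJ : UniqueDiffOn ℝ (Set.Icc xmin xmax) := uniqueDiffOn_Icc hx
  obtain ⟨ψt, ψx, hψtc, hψxc, hψts, hψxs⟩ := partials' ht hx hCψ
  obtain ⟨at', ax', hatc, haxc, hats, haxs⟩ := partials' ht hx hCa
  have hψcont : ContinuousOn (fun p : ℝ × ℝ => ψ p.1 p.2)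
      (Set.Icc t0 t1 ×ˢ Set.Icc xmin xmax) := hCψ.continuousOn
  have hacont : ContinuousOn (fun p : ℝ × ℝ => a p.1 p.2)
      (Set.Icc t0 t1 ×ˢ Set.Icc xmin xmax) := hCa.continuousOn
  -- PDE relations in terms of the chosen partials
  have hψrel : ∀ t' ∈ Set.Icc t0 t1, ∀ x' ∈ Set.Icc xmin xmax,
      ψt (t', x') = -(G t' * ψx (t', x')) := by
    intro t' ht' x' hx'
    have e1 := (hψts t' ht' x' hx').derivWithin (hUI t' ht')
    have e2 := (hψxs t' ht' x' hx').derivWithin (hUJ x' hx')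
    have h := hPDEψ t' ht' x' hx'
    rw [e1, e2] at h
    linarith
  have harel : ∀ t' ∈ Set.Icc t0 t1, ∀ x' ∈ Set.Icc xmin xmax,
      at' (t', x') = l * a t' x' + x' ^ 3 - G t' * ax' (t', x') := by
    intro t' ht' x' hx'
    have e1 := (hats t' ht' x' hx').derivWithin (hUI t' ht')
    have e2 := (haxs t' ht' x' hx').derivWithin (hUJ x' hx')
    have h := hPDEa t' ht' x' hx'
    rw [e1, e2] at h
    linarith
  -- notation
  set F : ℝ → ℝ := fun s => ∫ x in xmin..xmax, a s x * ψ s x with hFdef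
  set y : ℝ → ℝ := fun s => ∫ x in xmin..xmax, x ^ 3 * ψ s x with hydef
  set Q : ℝ × ℝ → ℝ :=
    fun p => at' p * ψ p.1 p.2 + a p.1 p.2 * ψt p with hQdef
  have hQcont : ContinuousOn Q (Set.Icc t0 t1 ×ˢ Set.Icc xmin xmax) :=
    (hatc.mul hψcont).add (hacont.mul hψtc)
  -- slice continuity facts
  have hsliceA : ∀ t' ∈ Set.Icc t0 t1, ContinuousOn (fun x' => a t' x' * ψ t' x')
      (Set.Icc xmin xmax) := fun t' ht' =>
    (hacont.mul hψcont).comp (by fun_prop) (fun x' hx' => Set.mk_mem_prod ht' hx')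
  have hsliceT : ∀ x' ∈ Set.Icc xmin xmax, ContinuousOn (fun s => a s x' * ψ s x')
      (Set.Icc t0 t1) := fun x' hx' =>
    (hacont.mul hψcont).comp (by fun_prop) (fun s hs => Set.mk_mem_prod hs hx')
  -- time-derivative of the product along a slice
  have hQt : ∀ t' ∈ Set.Icc t0 t1, ∀ x' ∈ Set.Icc xmin xmax,
      HasDerivWithinAt (fun s => a s x' * ψ s x') (Q (t', x')) (Set.Icc t0 t1) t' := by
    intro t' ht' x' hx'
    exact (hats t' ht' x' hx').mul (hψts t' ht' x' hx')
  -- space-derivative of the product along a slice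
  have hPx : ∀ t' ∈ Set.Icc t0 t1, ∀ x' ∈ Set.Icc xmin xmax,
      HasDerivWithinAt (fun ξ => a t' ξ * ψ t' ξ)
        (ax' (t', x') * ψ t' x' + a t' x' * ψx (t', x')) (Set.Icc xmin xmax) x' :=
    fun t' ht' x' hx' => (haxs t' ht' x' hx').mul (hψxs t' ht' x' hx')
  -- boundary integral is zero
  have hbd : ∀ t' ∈ Set.Icc t0 t1,
      (∫ x in xmin..xmax, (ax' (t', x) * ψ t' x + a t' x * ψx (t', x))) = 0 := by
    intro t' ht'
    have key := intervalIntegral.integral_eq_sub_of_hasDeriv_right_of_le hxm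
      (hsliceA t' ht')
      (fun x' hx' => (hPx t' ht' x' (Set.Ioo_subset_Icc_self hx')).mono_of_mem_nhdsWithin
        (nhdsWithin_le_nhds (Icc_mem_nhds hx'.1 hx'.2)))
      (by
        apply ContinuousOn.intervalIntegrable
        rw [Set.uIcc_of_le hxm]
        exact ((haxc.comp (by fun_prop) (fun x' hx' => Set.mk_mem_prod ht' hx')).mul
            (hψcont.comp (by fun_prop) (fun x' hx' => Set.mk_mem_prod ht' hx'))).add
          ((hacont.comp (by fun_prop) (fun x' hx' => Set.mk_mem_prod ht' hx')).mul
            (hψxc.comp (by fun_prop) (fun x' hx' => Set.mk_mem_prod ht' hx'))))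
    rw [key, hbψ t' ht', hba t' ht']
    ring
  -- integrability facts in x
  have hIb : ∀ t' ∈ Set.Icc t0 t1,
      IntervalIntegrable (fun x => a t' x * ψ t' x) volume xmin xmax := by
    intro t' ht'
    apply ContinuousOn.intervalIntegrable
    rw [Set.uIcc_of_le hxm]; exact hsliceA t' ht'
  have hIy : ∀ t' ∈ Set.Icc t0 t1,
      IntervalIntegrable (fun x => x ^ 3 * ψ t' x) volume xmin xmax := by
    intro t' ht'
    apply ContinuousOn.intervalIntegrable
    rw [Set.uIcc_of_le hxm]
    exact (continuousOn_pow 3).mul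
      (hψcont.comp (by fun_prop) (fun x' hx' => Set.mk_mem_prod ht' hx'))
  have hIW : ∀ t' ∈ Set.Icc t0 t1,
      IntervalIntegrable (fun x => ax' (t', x) * ψ t' x + a t' x * ψx (t', x))
        volume xmin xmax := by
    intro t' ht'
    apply ContinuousOn.intervalIntegrable
    rw [Set.uIcc_of_le hxm]
    exact ((haxc.comp (by fun_prop) (fun x' hx' => Set.mk_mem_prod ht' hx')).mul
        (hψcont.comp (by fun_prop) (fun x' hx' => Set.mk_mem_prod ht' hx'))).add
      ((hacont.comp (by fun_prop) (fun x' hx' => Set.mk_mem_prod ht' hx')).mul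
        (hψxc.comp (by fun_prop) (fun x' hx' => Set.mk_mem_prod ht' hx')))
  -- ∫ Q(t,·) = l F t + y t
  have hQint : ∀ t' ∈ Set.Icc t0 t1,
      (∫ x in xmin..xmax, Q (t', x)) = l * F t' + y t' := by
    intro t' ht'
    have e : Set.EqOn (fun x => Q (t', x))
        (fun x => l * (a t' x * ψ t' x) + x ^ 3 * ψ t' x
          - G t' * (ax' (t', x) * ψ t' x + a t' x * ψx (t', x)))
        (Set.uIcc xmin xmax) := by
      intro x' hx'
      rw [Set.uIcc_of_le hxm] at hx'
      simp only [hQdef]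
      rw [harel t' ht' x' hx', hψrel t' ht' x' hx']
      ring
    rw [intervalIntegral.integral_congr e,
      intervalIntegral.integral_sub (((hIb t' ht').const_mul l).add (hIy t' ht'))
        ((hIW t' ht').const_mul (G t')),
      intervalIntegral.integral_add ((hIb t' ht').const_mul l) (hIy t' ht'),
      intervalIntegral.integral_const_mul, intervalIntegral.integral_const_mul,
      hbd t' ht']
    simp [hFdef, hydef]
  -- FTC in time for each slice
  have hFtc : ∀ x' ∈ Set.Icc xmin xmax, ∀ t' ∈ Set.Icc t0 t1,
      a t' x' * ψ t' x' - a t0 x' * ψ t0 x' = ∫ s in t0..t', Q (s, x') := by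
    intro x' hx' t' ht'
    symm
    apply intervalIntegral.integral_eq_sub_of_hasDeriv_right_of_le ht'.1
    · exact (hsliceT x' hx').mono (Set.Icc_subset_Icc le_rfl ht'.2)
    · intro s hs
      have hsI : s ∈ Set.Icc t0 t1 := ⟨hs.1.le, hs.2.le.trans ht'.2⟩
      exact (hQt s hsI x' hx').mono_of_mem_nhdsWithin
        (nhdsWithin_le_nhds (Icc_mem_nhds hs.1 (lt_of_lt_of_le hs.2 ht'.2)))
    · apply ContinuousOn.intervalIntegrable
      rw [Set.uIcc_of_le ht'.1]
      exact (hQcont.comp (by fun_prop) (fun s hs =>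
        Set.mk_mem_prod ⟨hs.1, hs.2.trans ht'.2⟩ hx')).mono (Set.Subset.refl _)
  -- integral representation of F
  have hFrep : ∀ t' ∈ Set.Icc t0 t1, F t' = F t0 + ∫ s in t0..t', (l * F s + y s) := by
    intro t' ht'
    have step1 : F t' - F t0 = ∫ x in xmin..xmax, (a t' x * ψ t' x - a t0 x * ψ t0 x) :=
      (intervalIntegral.integral_sub (hIb t' ht') (hIb t0 ht0I)).symm
    have step2 : (∫ x in xmin..xmax, (a t' x * ψ t' x - a t0 x * ψ t0 x))
        = ∫ x in xmin..xmax, ∫ s in t0..t', Q (s, x) := by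
      apply intervalIntegral.integral_congr
      intro x' hx'
      rw [Set.uIcc_of_le hxm] at hx'
      exact hFtc x' hx' t' ht'
    have step3 := swap_int' (t := t') hxm ht'.1 ht'.2 hQcont
    have step4 : (∫ s in t0..t', ∫ x in xmin..xmax, Q (s, x))
        = ∫ s in t0..t', (l * F s + y s) := by
      apply intervalIntegral.integral_congr
      intro s hs
      rw [Set.uIcc_of_le ht'.1] at hs
      exact hQint s ⟨hs.1, hs.2.trans ht'.2⟩
    have := step1.trans (step2.trans (step3.trans step4))
    linarith
  -- continuity of F and y
  have hFcont : ContinuousOn F (Set.Icc t0 t1) :=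
    contOn_param_int' hxm (hacont.mul hψcont)
  have hycont : ContinuousOn y (Set.Icc t0 t1) := by
    apply contOn_param_int' (f := fun p : ℝ × ℝ => p.2 ^ 3 * ψ p.1 p.2) hxm
    exact ((continuous_pow 3).comp continuous_snd).continuousOn.mul hψcont
  have hgcont : ContinuousOn (fun s => l * F s + y s) (Set.Icc t0 t1) :=
    (continuousOn_const.mul hFcont).add hycont
  -- derivative of F
  have hFderiv : ∀ t' ∈ Set.Icc t0 t1,
      HasDerivWithinAt F (l * F t' + y t') (Set.Icc t0 t1) t' := by
    intro t' ht'
    have h0 := (ftc_within' hgcont ht').const_add (F t0)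
    exact h0.congr (fun u hu => hFrep u hu) (hFrep t' ht')
  -- error dynamics
  have hEderiv : ∀ t' ∈ Set.Icc t0 t1,
      HasDerivWithinAt (fun s => F s - z s) (l * (F t' - z t')) (Set.Icc t0 t1) t' := by
    intro t' ht'
    have h := (hFderiv t' ht').sub (hz t' ht')
    exact h.congr_deriv (by simp only [hydef]; ring)
  have hzc : ContinuousOn z (Set.Icc t0 t1) := fun s hs => (hz s hs).continuousWithinAt
  -- exp(-l(t-t0)) * E is constant
  have hK : ∀ t' ∈ Set.Icc t0 t1,
      Real.exp (-l * (t' - t0)) * (F t' - z t')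
        = Real.exp (-l * (t0 - t0)) * (F t0 - z t0) := by
    apply constant_of_has_deriv_right_zero
    · exact ((Real.continuous_exp.comp (by fun_prop)).continuousOn).mul (hFcont.sub hzc)
    · intro s hs
      have hexp : HasDerivAt (fun u => Real.exp (-l * (u - t0)))
          (-l * Real.exp (-l * (s - t0))) s := by
        have hinner : HasDerivAt (fun u : ℝ => -l * (u - t0)) (-l) s := by
          simpa using ((hasDerivAt_id s).sub_const t0).const_mul (-l)
        have := (Real.hasDerivAt_exp (-l * (s - t0))).comp s hinner
        exact this.congr_deriv (by ring)
      have hE' : HasDerivWithinAt (fun u => F u - z u) (l * (F s - z s)) (Set.Ici s) s :=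
        (hEderiv s (Set.Ico_subset_Icc_self hs)).mono_of_mem_nhdsWithin
          (Icc_mem_nhdsGE_of_mem hs)
      have h2 := (hexp.hasDerivWithinAt).mul hE'
      exact h2.congr_deriv (by ring)
  have hmain : ∀ t' ∈ Set.Icc t0 t1,
      F t' - z t' = Real.exp (l * (t' - t0)) * (F t0 - z t0) := by
    intro t' ht'
    have h := hK t' ht'
    simp only [sub_self, mul_zero, Real.exp_zero, one_mul] at h
    have hne : Real.exp (-l * (t' - t0)) ≠ 0 := (Real.exp_pos _).ne'
    have : F t' - z t' = (F t0 - z t0) / Real.exp (-l * (t' - t0)) := by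
      field_simp at h ⊢
      linarith [h]
    rw [this, neg_mul, Real.exp_neg, div_inv_eq_mul]
    ring
  constructor
  · exact hmain
  · intro h0 t' ht'
    have hF0 : F t0 = 0 := by
      have e : Set.EqOn (fun x => a t0 x * ψ t0 x) (fun _ => (0:ℝ)) (Set.uIcc xmin xmax) := by
        intro x' hx'
        rw [Set.uIcc_of_le hxm] at hx'
        simp [h0 x' hx']
      simp only [hFdef]
      rw [intervalIntegral.integral_congr e]
      simp
    have := hmain t' ht'
    rw [hF0] at this
    rw [this]
    ring
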